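/- For all real numbers h, ρ, s with ρ, s > 0, (h²/9)·(ρs)³ + (h/3)·(ρs)²·(ρ+s) + (1/12)·(ρ+s)⁴ ≥ (1/(3√3))·(ρs)²·(ρ+s)·|h + (3/2)·(1/ρ + 1/s)|. -/

import Mathlib

theorem stmt_1 (h ρ s : ℝ) (hρ : 0 < ρ) (hs : 0 < s) :
    (h ^ 2 / 9) * (ρ * s) ^ 3 + (h / 3) * (ρ * s) ^ 2 * (ρ + s)
      + (1 / 12) * (ρ + s) ^ 4
    ≥ (1 / (3 * Real.sqrt 3)) * (ρ * s) ^ 2 * (ρ + s)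
        * |h + (3 / 2) * (1 / ρ + 1 / s)| := by
  set r := Real.sqrt 3 with hrdef
  have hr2 : r ^ 2 = 3 := Real.sq_sqrt (by norm_num)
  have hrpos : 0 < r := Real.sqrt_pos.mpr (by norm_num)
  set t := h + (3 / 2) * (1 / ρ + 1 / s) with ht
  have habs0 : 0 ≤ |t| := abs_nonneg t
  have hts : ρ * s * t = h * ρ * s + 3 / 2 * (ρ + s) := by
    rw [ht]; field_simp; ring
  have h1 : (ρ * s * |t|) ^ 2 = (h * ρ * s + 3 / 2 * (ρ + s)) ^ 2 := by
    rw [mul_pow, sq_abs, ← mul_pow, hts]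
  have hcoef : (1 : ℝ) / (3 * r) = r / 9 := by
    field_simp
    nlinarith [hr2]
  rw [ge_iff_le, hcoef]
  have key : (h ^ 2 / 9) * (ρ * s) ^ 3 + (h / 3) * (ρ * s) ^ 2 * (ρ + s)
      + (1 / 12) * (ρ + s) ^ 4 - r / 9 * (ρ * s) ^ 2 * (ρ + s) * |t|
      = (ρ * s) / 9 * (ρ * s * |t| - r * (ρ + s) / 2) ^ 2
        + (ρ + s) ^ 2 / 12 * (ρ - s) ^ 2 := by
    linear_combination (- ρ * s / 9) * h1 + (- (ρ * s) * (ρ + s) ^ 2 / 36) * hr2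
  nlinarith [mul_nonneg (mul_pos hρ hs).le (sq_nonneg (ρ * s * |t| - r * (ρ + s) / 2)),
    mul_nonneg (sq_nonneg (ρ + s)) (sq_nonneg (ρ - s)), key]
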